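/- Let f(u,v) be a polynomial in two variables u,v over a commutative ring containing ℚ, and let F(u) be the unique polynomial such that F(n) = ∑_{j=0}^{n-1} f(j, n-j) for all integers n ≥ 1. Then for all n ≥ 1, F(-n) = - ∑_{j=1}^{n} f(-j, -n+j). -/

import Mathlib

open Polynomial Finset

private lemma aux_isUnit {R : Type*} [CommRing R] [Algebra ℚ R] (n : ℕ) :
    IsUnit ((n + 1 : ℕ) : R) := by
  have h : ((n + 1 : ℕ) : R) = algebraMap ℚ R ((n + 1 : ℕ) : ℚ) := by
    simp
  rw [h]
  exact (isUnit_iff_ne_zero.2 (by exact_mod_cast Nat.succ_ne_zero n)).map (algebraMap ℚ R)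

private lemma aux_eval_zero {R : Type*} [CommRing R] [Algebra ℚ R] :
    ∀ (d : ℕ) (p : R[X]), p.natDegree ≤ d → (∀ n : ℕ, p.eval (n : R) = 0) → p = 0 := by
  intro d
  induction d with
  | zero =>
    intro p hdeg h
    have h0 : p.coeff 0 = 0 := by
      have := h 0
      rwa [Nat.cast_zero, ← Polynomial.coeff_zero_eq_eval_zero] at this
    rw [Polynomial.eq_C_of_natDegree_le_zero hdeg, h0, map_zero]
  | succ d ih =>
    intro p hdeg h
    have h0 : p.coeff 0 = 0 := by
      have := h 0
      rwa [Nat.cast_zero, ← Polynomial.coeff_zero_eq_eval_zero] at this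
    have hp : X * p.divX = p := by
      have := Polynomial.X_mul_divX_add p
      rwa [h0, map_zero, add_zero] at this
    set q := (p.divX).comp (X + 1) with hq_def
    have hq : ∀ n : ℕ, q.eval (n : R) = 0 := by
      intro n
      have h1 := h (n + 1)
      rw [← hp, Polynomial.eval_mul, Polynomial.eval_X] at h1
      have h3 : (p.divX).eval (((n + 1 : ℕ)) : R) = 0 :=
        (IsUnit.mul_right_eq_zero (aux_isUnit n)).1 h1
      rw [hq_def, Polynomial.eval_comp]
      simpa using h3
    have hqdeg : q.natDegree ≤ d := by
      have h1 : (X + 1 : R[X]).natDegree ≤ 1 :=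
        (Polynomial.natDegree_add_le _ _).trans
          (by simp [Polynomial.natDegree_X_le])
      have h2 : q.natDegree ≤ (p.divX).natDegree * (X + 1 : R[X]).natDegree :=
        Polynomial.natDegree_comp_le
      have h3 : (p.divX).natDegree = p.natDegree - 1 :=
        Polynomial.natDegree_divX_eq_natDegree_tsub_one
      have h4 := Nat.mul_le_mul_left (p.divX).natDegree h1
      omega
    have hq0 : q = 0 := ih q hqdeg hq
    have hdiv : p.divX = 0 := by
      have h2 := congrArg (fun r : R[X] => r.comp (X - 1)) hq0
      simp only [hq_def, Polynomial.comp_assoc, Polynomial.zero_comp] at h2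
      have h3 : ((X + 1 : R[X]).comp (X - 1)) = X := by
        simp
      rwa [h3, Polynomial.comp_X] at h2
    rw [← hp, hdiv, mul_zero]

noncomputable def auxPp (p : ℕ) : Polynomial ℚ :=
  ∑ i ∈ range (p + 1),
    Polynomial.C (_root_.bernoulli i * ((p + 1).choose i) / (p + 1)) * X ^ (p + 1 - i)

private lemma auxPp_eval_nat (p n : ℕ) :
    (auxPp p).eval (n : ℚ) = ∑ k ∈ range n, (k : ℚ) ^ p := by
  rw [sum_range_pow, auxPp, Polynomial.eval_finset_sum]
  refine sum_congr rfl fun i _ => ?_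
  simp only [Polynomial.eval_mul, Polynomial.eval_C, Polynomial.eval_pow, Polynomial.eval_X]
  ring

private lemma auxPp_eval_neg (p n : ℕ) :
    (auxPp p).eval (-(n : ℚ)) = -∑ k ∈ range n, (-(k : ℚ) - 1) ^ p := by
  have key : ∑ k ∈ range n, (-(k : ℚ) - 1) ^ p
      = (-1) ^ p * ∑ k ∈ Ico 1 (n + 1), (k : ℚ) ^ p := by
    rw [mul_sum]
    rw [Finset.sum_Ico_eq_sum_range]
    refine sum_congr (by simp) fun k _ => ?_
    have h : (-(k : ℚ) - 1) = (-1) * ((1 + k : ℕ) : ℚ) := by push_cast; ring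
    rw [h, mul_pow]
  rw [key, sum_Ico_pow, mul_sum, auxPp, Polynomial.eval_finset_sum, ← Finset.sum_neg_distrib]
  refine sum_congr rfl fun i hi => ?_
  rw [Polynomial.eval_mul, Polynomial.eval_C, Polynomial.eval_pow, Polynomial.eval_X]
  rw [bernoulli'_eq_bernoulli]
  have hi' : i ≤ p := by simpa [Nat.lt_succ_iff] using hi
  have hexp : (-(n : ℚ)) ^ (p + 1 - i) = (-1) ^ (p + 1) * (-1) ^ i * (n : ℚ) ^ (p + 1 - i) := by
    rw [neg_pow]
    congr 1
    have h1 : ((-1 : ℚ)) ^ (p + 1) = (-1) ^ (p + 1 - i) * (-1) ^ i := by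
      rw [← pow_add]; congr 1; omega
    rw [h1, mul_assoc, ← pow_add, ← two_mul, pow_mul]
    norm_num
  rw [hexp]
  ring

noncomputable def auxPhiab (a b : ℕ) : Polynomial ℚ :=
  ∑ k ∈ range (b + 1),
    Polynomial.C ((b.choose k : ℚ) * (-1) ^ k) * X ^ (b - k) * auxPp (a + k)

private lemma auxPhiab_eval_nat (a b n : ℕ) :
    (auxPhiab a b).eval (n : ℚ) = ∑ j ∈ range n, (j : ℚ) ^ a * ((n : ℚ) - j) ^ b := by
  rw [auxPhiab, Polynomial.eval_finset_sum]
  have step : ∀ k ∈ range (b + 1),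
      (Polynomial.C ((b.choose k : ℚ) * (-1) ^ k) * X ^ (b - k) * auxPp (a + k)).eval (n : ℚ)
        = ∑ j ∈ range n, (b.choose k : ℚ) * (-1) ^ k * (n : ℚ) ^ (b - k) * (j : ℚ) ^ (a + k) := by
    intro k _
    rw [Polynomial.eval_mul, Polynomial.eval_mul, Polynomial.eval_C, Polynomial.eval_pow,
      Polynomial.eval_X, auxPp_eval_nat, mul_sum]
  rw [sum_congr rfl step, sum_comm]
  refine sum_congr rfl fun j _ => ?_
  have hbin : ((n : ℚ) - j) ^ b = ∑ k ∈ range (b + 1), (-(j:ℚ)) ^ k * (n : ℚ) ^ (b - k) * b.choose k := by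
    rw [sub_eq_add_neg, add_comm]
    exact add_pow (-(j:ℚ)) (n:ℚ) b
  rw [hbin, mul_sum]
  refine sum_congr rfl fun k _ => ?_
  rw [pow_add, neg_pow]
  ring

private lemma auxPhiab_eval_neg (a b n : ℕ) :
    (auxPhiab a b).eval (-(n : ℚ)) = -∑ j ∈ Icc 1 n, (-(j : ℚ)) ^ a * (-(n : ℚ) + j) ^ b := by
  rw [auxPhiab, Polynomial.eval_finset_sum]
  have step : ∀ k ∈ range (b + 1),
      (Polynomial.C ((b.choose k : ℚ) * (-1) ^ k) * X ^ (b - k) * auxPp (a + k)).eval (-(n : ℚ))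
        = ∑ j ∈ range n, -((b.choose k : ℚ) * (-1) ^ k * (-(n : ℚ)) ^ (b - k) * (-(j:ℚ) - 1) ^ (a + k)) := by
    intro k _
    rw [Polynomial.eval_mul, Polynomial.eval_mul, Polynomial.eval_C, Polynomial.eval_pow,
      Polynomial.eval_X, auxPp_eval_neg, mul_neg, mul_sum, ← Finset.sum_neg_distrib]
  rw [sum_congr rfl step, sum_comm]
  have hI : ∑ j ∈ Icc 1 n, (-(j : ℚ)) ^ a * (-(n : ℚ) + j) ^ b
      = ∑ j ∈ range n, (-(j:ℚ) - 1) ^ a * (-(n : ℚ) + (j + 1)) ^ b := by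
    rw [← Finset.Ico_add_one_right_eq_Icc, Finset.sum_Ico_eq_sum_range]
    refine sum_congr (by simp) fun j _ => ?_
    push_cast
    ring_nf
  rw [hI, ← Finset.sum_neg_distrib]
  refine sum_congr rfl fun j _ => ?_
  rw [Finset.sum_neg_distrib, neg_inj]
  have hbin : (-(n : ℚ) + ((j:ℚ) + 1)) ^ b
      = ∑ k ∈ range (b + 1), ((j:ℚ) + 1) ^ k * (-(n:ℚ)) ^ (b - k) * b.choose k := by
    rw [add_comm]
    exact add_pow ((j:ℚ) + 1) (-(n:ℚ)) b
  rw [hbin, mul_sum]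
  refine sum_congr rfl fun k _ => ?_
  have hjk : ((j:ℚ) + 1) ^ k = (-1) ^ k * (-(j:ℚ) - 1) ^ k := by
    rw [← mul_pow]; ring_nf
  rw [hjk, pow_add]
  ring

private lemma aux_exists_Phi {R : Type*} [CommRing R] [Algebra ℚ R]
    (f : MvPolynomial (Fin 2) R) :
    ∃ Φ : Polynomial R,
      (∀ n : ℕ, Φ.eval (n : R) =
        ∑ j ∈ range n, MvPolynomial.eval ![(j : R), ((n - j : ℕ) : R)] f) ∧
      (∀ n : ℕ, Φ.eval (-(n : R)) =
        -∑ j ∈ Icc 1 n, MvPolynomial.eval ![-(j : R), -(n : R) + (j : R)] f) := by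
  induction f using MvPolynomial.induction_on' with
  | add p q hp hq =>
    obtain ⟨Φ₁, h1p, h1n⟩ := hp
    obtain ⟨Φ₂, h2p, h2n⟩ := hq
    refine ⟨Φ₁ + Φ₂, fun n => ?_, fun n => ?_⟩
    · simp only [Polynomial.eval_add, h1p n, h2p n, map_add, Finset.sum_add_distrib]
    · simp only [Polynomial.eval_add, h1n n, h2n n, map_add, Finset.sum_add_distrib]
      ring
  | monomial d c =>
    set a := d 0 with ha
    set b := d 1 with hb
    have hev : ∀ x y : R, MvPolynomial.eval ![x, y] (MvPolynomial.monomial d c)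
        = c * x ^ a * y ^ b := by
      intro x y
      rw [MvPolynomial.eval_monomial, Finsupp.prod_pow]
      rw [Fin.prod_univ_two]
      simp [ha, hb, mul_assoc]
    refine ⟨Polynomial.C c * (auxPhiab a b).map (algebraMap ℚ R), fun n => ?_, fun n => ?_⟩
    · rw [Polynomial.eval_mul, Polynomial.eval_C, Polynomial.eval_map]
      have hcast : ((n : R)) = algebraMap ℚ R ((n : ℚ)) := by simp
      rw [hcast, Polynomial.eval₂_at_apply, auxPhiab_eval_nat, map_sum, mul_sum]
      refine sum_congr rfl fun j hj => ?_
      rw [hev]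
      have hj' : j ≤ n := le_of_lt (mem_range.1 hj)
      push_cast [Nat.cast_sub hj']
      ring
    · rw [Polynomial.eval_mul, Polynomial.eval_C, Polynomial.eval_map]
      have hcast : (-(n : R)) = algebraMap ℚ R (-(n : ℚ)) := by simp
      rw [hcast, Polynomial.eval₂_at_apply, auxPhiab_eval_neg, map_neg, map_sum, mul_neg, mul_sum]
      rw [← Finset.sum_neg_distrib, ← Finset.sum_neg_distrib]
      refine sum_congr rfl fun j hj => ?_
      rw [hev]
      push_cast
      ring


/-- **Lemma 2.2** (polynomial interpolation lemma).
Let `f(u,v)` be a polynomial in two variables over a commutative ring containing `ℚ`,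
and let `F(u)` be the (unique) polynomial with `F(n) = ∑_{j=0}^{n-1} f(j, n-j)` for all
integers `n ≥ 1`.  Then for all `n ≥ 1` we have `F(-n) = - ∑_{j=1}^{n} f(-j, -n+j)`. -/
theorem stmt0 {R : Type*} [CommRing R] [Algebra ℚ R]
    (f : MvPolynomial (Fin 2) R) (F : Polynomial R)
    (hF : ∀ n : ℕ, 1 ≤ n →
      F.eval (n : R) =
        ∑ j ∈ Finset.range n, MvPolynomial.eval ![(j : R), ((n - j : ℕ) : R)] f) :
    ∀ n : ℕ, 1 ≤ n →
      F.eval (-(n : R)) =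
        - ∑ j ∈ Finset.Icc 1 n, MvPolynomial.eval ![-(j : R), -(n : R) + (j : R)] f := by
  obtain ⟨Φ, hΦp, hΦn⟩ := aux_exists_Phi f
  have hz : ∀ n : ℕ, ((F - Φ).comp (X + 1)).eval (n : R) = 0 := by
    intro n
    rw [Polynomial.eval_comp, Polynomial.eval_add, Polynomial.eval_X, Polynomial.eval_one]
    have hc : ((n : R) + 1) = (((n + 1 : ℕ)) : R) := by push_cast; ring
    rw [hc, Polynomial.eval_sub, hF (n + 1) (by omega), hΦp (n + 1), sub_self]
  have hq0 : (F - Φ).comp (X + 1) = 0 :=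
    aux_eval_zero ((F - Φ).comp (X + 1)).natDegree _ le_rfl hz
  have hFΦ : F - Φ = 0 := by
    have h2 := congrArg (fun r : Polynomial R => r.comp (X - 1)) hq0
    simp only [Polynomial.comp_assoc, Polynomial.zero_comp] at h2
    have h3 : ((X + 1 : Polynomial R).comp (X - 1)) = X := by simp
    rwa [h3, Polynomial.comp_X] at h2
  have hFeq : F = Φ := by
    have := sub_eq_zero.1 hFΦ
    exact this
  intro n _
  rw [hFeq]
  exact hΦn n
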